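/- Let H be a Hilbert space, D ⊆ H a subspace, and S : D → H a linear map such that ‖v‖ ≤ C‖S v‖ for all v ∈ D with constant C > 0. Then for every f ∈ H there exists u ∈ H with ‖u‖ ≤ C‖f‖ such that ⟨S v, u⟩ = ⟨v, f⟩ for all v ∈ D. -/

import Mathlib

/-- Let H be a (complex) Hilbert space, D ⊆ H a subspace, S : D → H linear
with ‖v‖ ≤ C‖Sv‖ for all v ∈ D, C > 0. Then for every f ∈ H there is u ∈ H with
‖u‖ ≤ C‖f‖ and ⟨Sv, u⟩ = ⟨v, f⟩ for all v ∈ D. -/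
theorem statement4 {H : Type*} [NormedAddCommGroup H] [InnerProductSpace ℂ H]
    [CompleteSpace H] (D : Submodule ℂ H) (S : D →ₗ[ℂ] H) (C : ℝ) (hC : 0 < C)
    (hest : ∀ v : D, ‖(v : H)‖ ≤ C * ‖S v‖) (f : H) :
    ∃ u : H, ‖u‖ ≤ C * ‖f‖ ∧
      ∀ v : D, (inner ℂ (S v) u : ℂ) = (inner ℂ (v : H) f : ℂ) := by
  -- S is injective
  have hinj : Function.Injective S := by
    rw [← LinearMap.ker_eq_bot, LinearMap.ker_eq_bot']
    intro v hv
    have := hest v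
    rw [hv, norm_zero, mul_zero] at this
    exact Subtype.ext (norm_le_zero_iff.mp this)
  set e : D ≃ₗ[ℂ] LinearMap.range S := LinearEquiv.ofInjective S hinj
  -- linear functional on range S : S v ↦ ⟪f, v⟫
  set g : D →ₗ[ℂ] ℂ := (innerSL ℂ f).toLinearMap ∘ₗ D.subtype
  set L : LinearMap.range S →ₗ[ℂ] ℂ := g ∘ₗ (e.symm : LinearMap.range S →ₗ[ℂ] D)
  have hbound : ∀ w : LinearMap.range S, ‖L w‖ ≤ (C * ‖f‖) * ‖w‖ := by
    intro w
    set v : D := e.symm w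
    have hw : S v = (w : H) := by
      have : e v = w := e.apply_symm_apply w
      simpa [e, LinearEquiv.ofInjective_apply] using congrArg Subtype.val this
    have h1 : ‖L w‖ ≤ ‖f‖ * ‖(v : H)‖ := by
      simpa [L, g, v] using norm_inner_le_norm (𝕜 := ℂ) f (v : H)
    calc ‖L w‖ ≤ ‖f‖ * ‖(v : H)‖ := h1
      _ ≤ ‖f‖ * (C * ‖S v‖) := by
          exact mul_le_mul_of_nonneg_left (hest v) (norm_nonneg f)
      _ = (C * ‖f‖) * ‖(w : H)‖ := by rw [hw]; ring
      _ = (C * ‖f‖) * ‖w‖ := rfl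
  set Lc : LinearMap.range S →L[ℂ] ℂ := L.mkContinuous (C * ‖f‖) hbound
  obtain ⟨G, hGext, hGnorm⟩ := exists_extension_norm_eq (LinearMap.range S) Lc
  set u : H := (InnerProductSpace.toDual ℂ H).symm G
  refine ⟨u, ?_, ?_⟩
  · have hnu : ‖u‖ = ‖G‖ := (InnerProductSpace.toDual ℂ H).symm.norm_map G
    rw [hnu, hGnorm]
    exact Lc.opNorm_le_bound (by positivity) hbound
  · intro v
    have hmem : S v ∈ LinearMap.range S := ⟨v, rfl⟩
    have h1 : (inner ℂ u (S v) : ℂ) = G (S v) :=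
      InnerProductSpace.toDual_symm_apply
    have h2 : G (S v) = Lc ⟨S v, hmem⟩ := hGext ⟨S v, hmem⟩
    have h3 : Lc ⟨S v, hmem⟩ = (inner ℂ f (v : H) : ℂ) := by
      have hev : e.symm ⟨S v, hmem⟩ = v := by
        apply e.injective
        rw [e.apply_symm_apply]
        exact Subtype.ext rfl
      simp [Lc, L, g, LinearMap.mkContinuous_apply, hev]
    have := h1.trans (h2.trans h3)
    calc (inner ℂ (S v) u : ℂ) = starRingEnd ℂ (inner ℂ u (S v)) := (inner_conj_symm _ _).symm
      _ = starRingEnd ℂ (inner ℂ f (v : H)) := by rw [this]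
      _ = inner ℂ (v : H) f := inner_conj_symm _ _
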